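/- arXiv:2107.08675 — 4 statements merged into one kernel-verified Lean document; each statement's English description precedes it below -/
import Mathlib

section
/- In the real inner product space ℝ^d, any family of unit vectors whose pairwise inner products are all nonpositive has cardinality at most 2d. -/
open RealInnerProductSpace Module

lemma aux_pairwise_nonpos (n : ℕ) :
    ∀ (E : Type) [NormedAddCommGroup E] [InnerProductSpace ℝ E] [FiniteDimensional ℝ E],
      finrank ℝ E = n → ∀ S : Finset E, (∀ v ∈ S, v ≠ 0) →
      (∀ u ∈ S, ∀ v ∈ S, u ≠ v → ⟪u, v⟫ ≤ 0) → S.card ≤ 2 * n := by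
  induction n with
  | zero =>
    intro E _ _ _ hdim S hnz _
    have : Subsingleton E := finrank_zero_iff.mp hdim
    have : S = ∅ := by
      ext v
      simp only [Finset.notMem_empty, iff_false]
      intro hv
      exact hnz v hv (Subsingleton.elim v 0)
    simp [this]
  | succ n ih =>
    intro E _ _ _ hdim S hnz hip
    classical
    rcases S.eq_empty_or_nonempty with rfl | ⟨u, hu⟩
    · simp
    have hu0 : u ≠ 0 := hnz u hu
    have hnu : (0:ℝ) < ‖u‖ ^ 2 := by
      have := norm_pos_iff.mpr hu0
      positivity
    have huu : ⟪u, u⟫ = ‖u‖ ^ 2 := real_inner_self_eq_norm_sq u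
    set K : Submodule ℝ E := (ℝ ∙ u)ᗮ with hK
    haveI : Fact (finrank ℝ E = n + 1) := ⟨hdim⟩
    have hKdim : finrank ℝ K = n := Submodule.finrank_orthogonal_span_singleton hu0
    set w : E → E := fun v => v - (⟪u, v⟫ / ‖u‖ ^ 2) • u with hw
    have hwK : ∀ v, w v ∈ K := by
      intro v
      rw [hK, Submodule.mem_orthogonal_singleton_iff_inner_right]
      simp only [hw, inner_sub_right, real_inner_smul_right, huu]
      field_simp
      ring
    have hwinner : ∀ v v', ⟪w v, w v'⟫ = ⟪v, v'⟫ - ⟪u, v⟫ * ⟪u, v'⟫ / ‖u‖ ^ 2 := by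
      intro v v'
      simp only [hw, inner_sub_left, inner_sub_right, real_inner_smul_left,
        real_inner_smul_right, huu, real_inner_comm v u]
      field_simp
      ring
    -- split S
    set S' : Finset E := S.filter (fun v => w v ≠ 0) with hS'
    set S'' : Finset E := S.filter (fun v => ¬ w v ≠ 0) with hS''
    -- inner products of distinct elements of S' project nonpositively
    have hmemS' : ∀ v ∈ S', v ∈ S ∧ v ≠ u := by
      intro v hv
      rw [hS', Finset.mem_filter] at hv
      refine ⟨hv.1, ?_⟩
      intro hvu
      apply hv.2
      rw [hvu]
      show u - (⟪u, u⟫ / ‖u‖ ^ 2) • u = 0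
      rw [huu, div_self (ne_of_gt hnu), one_smul, sub_self]
    have hproj_nonpos : ∀ v ∈ S', ∀ v' ∈ S', v ≠ v' → ⟪w v, w v'⟫ ≤ 0 := by
      intro v hv v' hv' hne
      obtain ⟨hvS, hvu⟩ := hmemS' v hv
      obtain ⟨hv'S, hv'u⟩ := hmemS' v' hv'
      rw [hwinner]
      have h1 : ⟪u, v⟫ ≤ 0 := hip u hu v hvS (Ne.symm hvu)
      have h2 : ⟪u, v'⟫ ≤ 0 := hip u hu v' hv'S (Ne.symm hv'u)
      have h3 : ⟪v, v'⟫ ≤ 0 := hip v hvS v' hv'S hne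
      have : 0 ≤ ⟪u, v⟫ * ⟪u, v'⟫ := by nlinarith
      have : 0 ≤ ⟪u, v⟫ * ⟪u, v'⟫ / ‖u‖ ^ 2 := div_nonneg this (le_of_lt hnu)
      linarith
    -- the projection map into K
    set f : E → K := fun v => ⟨w v, hwK v⟩ with hf
    have hfinj : Set.InjOn f S' := by
      intro v hv v' hv' hfe
      by_contra hne
      have h1 : ⟪w v, w v'⟫ ≤ 0 := hproj_nonpos v hv v' hv' hne
      have h2 : w v = w v' := congrArg Subtype.val hfe
      rw [h2] at h1
      have hwv' : w v' ≠ 0 := (Finset.mem_filter.mp hv').2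
      have : (0:ℝ) < ⟪w v', w v'⟫ := by
        rw [real_inner_self_eq_norm_sq]
        have := norm_pos_iff.mpr hwv'
        positivity
      linarith
    set T : Finset K := S'.image f with hT
    have hTcard : T.card = S'.card := Finset.card_image_of_injOn hfinj
    have hTle : T.card ≤ 2 * n := by
      apply ih K hKdim
      · intro x hx
        obtain ⟨v, hv, rfl⟩ := Finset.mem_image.mp hx
        have : w v ≠ 0 := (Finset.mem_filter.mp hv).2
        simpa [hf, Submodule.mk_eq_zero] using this
      · intro x hx y hy hxy
        obtain ⟨v, hv, rfl⟩ := Finset.mem_image.mp hx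
        obtain ⟨v', hv', rfl⟩ := Finset.mem_image.mp hy
        have hne : v ≠ v' := fun h => hxy (by rw [h])
        have := hproj_nonpos v hv v' hv' hne
        simpa [hf, Submodule.coe_inner] using this
    -- the kernel part has at most 2 elements
    have hS''card : S''.card ≤ 2 := by
      have hmul : ∀ v ∈ S'', v = (⟪u, v⟫ / ‖u‖ ^ 2) • u := by
        intro v hv
        have : ¬ w v ≠ 0 := (Finset.mem_filter.mp hv).2
        have : w v = 0 := not_not.mp this
        have := sub_eq_zero.mp this
        exact this
      have herase : (S''.erase u).card ≤ 1 := by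
        rw [Finset.card_le_one]
        intro v hv v' hv'
        by_contra hne
        have hvS : v ∈ S := (Finset.mem_filter.mp (Finset.mem_of_mem_erase hv)).1
        have hv'S : v' ∈ S := (Finset.mem_filter.mp (Finset.mem_of_mem_erase hv')).1
        have hvu : v ≠ u := Finset.ne_of_mem_erase hv
        have hv'u : v' ≠ u := Finset.ne_of_mem_erase hv'
        set c := ⟪u, v⟫ / ‖u‖ ^ 2 with hc
        set c' := ⟪u, v'⟫ / ‖u‖ ^ 2 with hc'
        have hvc : v = c • u := hmul v (Finset.mem_of_mem_erase hv)
        have hv'c : v' = c' • u := hmul v' (Finset.mem_of_mem_erase hv')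
        have hcneg : c < 0 := by
          have h1 : ⟪u, v⟫ ≤ 0 := hip u hu v hvS (Ne.symm hvu)
          have h2 : c ≤ 0 := div_nonpos_of_nonpos_of_nonneg h1 (le_of_lt hnu)
          rcases lt_or_eq_of_le h2 with h | h
          · exact h
          · exfalso; apply hnz v hvS; rw [hvc, h, zero_smul]
        have hc'neg : c' < 0 := by
          have h1 : ⟪u, v'⟫ ≤ 0 := hip u hu v' hv'S (Ne.symm hv'u)
          have h2 : c' ≤ 0 := div_nonpos_of_nonpos_of_nonneg h1 (le_of_lt hnu)
          rcases lt_or_eq_of_le h2 with h | h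
          · exact h
          · exfalso; apply hnz v' hv'S; rw [hv'c, h, zero_smul]
        have hinpos : (0:ℝ) < ⟪v, v'⟫ := by
          rw [hvc, hv'c, real_inner_smul_left, real_inner_smul_right, huu]
          have : 0 < c * c' := mul_pos_of_neg_of_neg hcneg hc'neg
          nlinarith
        have := hip v hvS v' hv'S hne
        linarith
      have hsub : S'' ⊆ insert u (S''.erase u) :=
        Finset.subset_insert_iff.mpr (Finset.Subset.refl _)
      have := Finset.card_le_card hsub
      have := Finset.card_insert_le u (S''.erase u)
      omega
    have hsplit : S'.card + S''.card = S.card := Finset.card_filter_add_card_filter_not _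
    omega

/-- In ℝ^d, any finite family of unit vectors whose pairwise inner products are
all nonpositive has cardinality at most `2 * d`. -/
theorem unit_vectors_pairwise_nonpos_inner_card_le
    (d : ℕ) (hd : 0 < d) (S : Finset (EuclideanSpace ℝ (Fin d)))
    (hunit : ∀ v ∈ S, ‖v‖ = 1)
    (hip : ∀ u ∈ S, ∀ v ∈ S, u ≠ v → ⟪u, v⟫ ≤ 0) :
    S.card ≤ 2 * d := by
  apply aux_pairwise_nonpos d (EuclideanSpace ℝ (Fin d)) (by simp) S
  · intro v hv
    intro h
    have := hunit v hv
    rw [h, norm_zero] at this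
    norm_num at this
  · exact hip
end

section
/- The matrix E1 (with entries E1[1,4]=E1[4,1]=E1[2,3]=E1[3,2]=1/2, E1[2,2]=E1[3,3]=1, others zero) satisfies Tr(E1 σ) ≥ 0 for every separable state σ on ℂ²⊗ℂ², but E1 is not positive semidefinite. -/
open Matrix Kronecker ComplexOrder

noncomputable section

def kron2 (A B : Matrix (Fin 2) (Fin 2) ℂ) : Matrix (Fin 4) (Fin 4) ℂ :=
  Matrix.reindex finProdFinEquiv finProdFinEquiv (A ⊗ₖ B)

/-- A 2×2 density matrix: positive semidefinite with unit trace. -/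
def IsDensity (ρ : Matrix (Fin 2) (Fin 2) ℂ) : Prop := ρ.PosSemidef ∧ ρ.trace = 1

/-- A separable state on ℂ²⊗ℂ²: a finite convex combination of product states. -/
def IsSepState (σ : Matrix (Fin 4) (Fin 4) ℂ) : Prop :=
  ∃ (k : ℕ) (p : Fin k → ℝ) (A B : Fin k → Matrix (Fin 2) (Fin 2) ℂ),
    (∀ i, 0 ≤ p i) ∧ (∑ i, p i = 1) ∧ (∀ i, IsDensity (A i)) ∧ (∀ i, IsDensity (B i)) ∧
    σ = ∑ i, ((p i : ℂ)) • kron2 (A i) (B i)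

def E1 : Matrix (Fin 4) (Fin 4) ℂ :=
  !![0, 0, 0, 1/2;
     0, 1, 1/2, 0;
     0, 1/2, 1, 0;
     1/2, 0, 0, 0]

lemma e0' : (finProdFinEquiv.symm (0:Fin 4) : Fin 2 × Fin 2) = (0,0) := by decide
lemma e1' : (finProdFinEquiv.symm (1:Fin 4) : Fin 2 × Fin 2) = (0,1) := by decide
lemma e2' : (finProdFinEquiv.symm (2:Fin 4) : Fin 2 × Fin 2) = (1,0) := by decide
lemma e3' : (finProdFinEquiv.symm (3:Fin 4) : Fin 2 × Fin 2) = (1,1) := by decide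

lemma trE1 (A B : Matrix (Fin 2) (Fin 2) ℂ) :
    (E1 * kron2 A B).trace =
      A 0 0 * B 1 1 + A 1 1 * B 0 0 + (1/2) * ((A 0 1 + A 1 0) * (B 0 1 + B 1 0)) := by
  simp [Matrix.trace, Matrix.mul_apply, Fin.sum_univ_four, E1, kron2, Matrix.reindex_apply,
    Matrix.submatrix_apply, kroneckerMap_apply, Matrix.vecMul, dotProduct]
  rw [e0', e1', e2', e3']
  ring

lemma psd_diag00 (A : Matrix (Fin 2) (Fin 2) ℂ) (h : A.PosSemidef) :
    A 0 0 = ((A 0 0).re : ℂ) ∧ 0 ≤ (A 0 0).re := by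
  constructor
  · have := h.isHermitian.apply 0 0
    exact (Complex.conj_eq_iff_re.1 (by simpa using this)).symm ▸ rfl
  · have := h.re_dotProduct_nonneg ![1, 0]
    simpa [dotProduct, Matrix.mulVec, Fin.sum_univ_two] using this

lemma psd_diag11 (A : Matrix (Fin 2) (Fin 2) ℂ) (h : A.PosSemidef) :
    A 1 1 = ((A 1 1).re : ℂ) ∧ 0 ≤ (A 1 1).re := by
  constructor
  · have := h.isHermitian.apply 1 1
    exact (Complex.conj_eq_iff_re.1 (by simpa using this)).symm ▸ rfl
  · have := h.re_dotProduct_nonneg ![0, 1]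
    simpa [dotProduct, Matrix.mulVec, Fin.sum_univ_two] using this

lemma psd_off (A : Matrix (Fin 2) (Fin 2) ℂ) (h : A.PosSemidef) :
    A 0 1 + A 1 0 = (2 * (A 1 0).re : ℂ) := by
  have h01 : A 0 1 = star (A 1 0) := (h.isHermitian.apply 0 1).symm
  rw [h01, add_comm, Complex.star_def, Complex.add_conj]
  push_cast
  ring

lemma psd_quad (A : Matrix (Fin 2) (Fin 2) ℂ) (h : A.PosSemidef) (t : ℝ) :
    0 ≤ (A 0 0).re * (t * t) + (2 * (A 1 0).re) * t + (A 1 1).re := by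
  have := h.re_dotProduct_nonneg ![(t:ℂ), 1]
  have h01 : A 0 1 = star (A 1 0) := (h.isHermitian.apply 0 1).symm
  simp [dotProduct, Matrix.mulVec, Fin.sum_univ_two, h01, Complex.add_re,
    Complex.mul_re] at this
  nlinarith [this]

lemma psd_discrim (A : Matrix (Fin 2) (Fin 2) ℂ) (h : A.PosSemidef) :
    (A 1 0).re ^ 2 ≤ (A 0 0).re * (A 1 1).re := by
  have hd := discrim_le_zero (fun t => psd_quad A h t)
  rw [discrim] at hd
  nlinarith [hd]

lemma key (A B : Matrix (Fin 2) (Fin 2) ℂ) (hA : A.PosSemidef) (hB : B.PosSemidef) :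
    0 ≤ (E1 * kron2 A B).trace := by
  obtain ⟨hA0, hA0n⟩ := psd_diag00 A hA
  obtain ⟨hA1, hA1n⟩ := psd_diag11 A hA
  obtain ⟨hB0, hB0n⟩ := psd_diag00 B hB
  obtain ⟨hB1, hB1n⟩ := psd_diag11 B hB
  have hdA := psd_discrim A hA
  have hdB := psd_discrim B hB
  rw [trE1, hA0, hA1, hB0, hB1, psd_off A hA, psd_off B hB]
  have h2 : (((A 0 0).re : ℂ) * ((B 1 1).re : ℂ) + ((A 1 1).re : ℂ) * ((B 0 0).re : ℂ) +
      1/2 * (2 * ((A 1 0).re : ℂ) * (2 * ((B 1 0).re : ℂ)))) =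
      (((A 0 0).re * (B 1 1).re + (A 1 1).re * (B 0 0).re +
        2 * (A 1 0).re * (B 1 0).re : ℝ) : ℂ) := by
    push_cast; ring
  rw [h2, Complex.zero_le_real]
  nlinarith [sq_nonneg ((A 0 0).re * (B 1 1).re - (A 1 1).re * (B 0 0).re),
    mul_nonneg (mul_nonneg hA0n hB0n) (mul_nonneg hA1n hB1n),
    mul_nonneg (sub_nonneg.2 hdA) (sub_nonneg.2 hdB),
    mul_nonneg (sub_nonneg.2 hdA) (mul_nonneg hB0n hB1n),
    mul_nonneg (sub_nonneg.2 hdB) (mul_nonneg hA0n hA1n),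
    mul_nonneg hA0n hB1n, mul_nonneg hA1n hB0n]

/-- `E1` yields nonnegative trace on every separable state, yet `E1` is not
positive semidefinite (there is a vector with `⟨v, E1 v⟩ < 0`). -/
theorem E1_positive_on_separables_but_not_posSemidef :
    (∀ σ : Matrix (Fin 4) (Fin 4) ℂ, IsSepState σ → 0 ≤ (E1 * σ).trace) ∧
    (∃ v : Fin 4 → ℂ, (star v ⬝ᵥ E1.mulVec v).re < 0) ∧ ¬ E1.PosSemidef := by
  have hvec : (star (![1, 0, 0, -1] : Fin 4 → ℂ) ⬝ᵥ E1.mulVec ![1, 0, 0, -1]).re = -1 := by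
    simp [dotProduct, Matrix.mulVec, Fin.sum_univ_four, E1, Matrix.vecHead, Matrix.vecTail]
    norm_num
  refine ⟨?_, ⟨![1, 0, 0, -1], by rw [hvec]; norm_num⟩, ?_⟩
  · rintro σ ⟨k, p, A, B, hp, -, hA, hB, rfl⟩
    rw [Finset.mul_sum, Matrix.trace_sum]
    refine Finset.sum_nonneg fun i _ => ?_
    rw [Matrix.mul_smul, Matrix.trace_smul, smul_eq_mul]
    exact mul_nonneg (by rw [Complex.zero_le_real]; exact hp i)
      (key (A i) (B i) (hA i).1 (hB i).1)
  · intro h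
    have h3 : (0:ℝ) ≤ (star (![1, 0, 0, -1] : Fin 4 → ℂ) ⬝ᵥ E1.mulVec ![1, 0, 0, -1]).re :=
      h.re_dotProduct_nonneg ![1, 0, 0, -1]
    rw [hvec] at h3
    linarith

end
end

section
/- At most 12 pure product states of two qubits can be pairwise perfectly distinguished in the minimal tensor product (SEP) theory: any set of pairs of unit Bloch vectors (nᵢ, mᵢ) ∈ ℝ³×ℝ³ with nᵢ·nⱼ + mᵢ·mⱼ ≤ 0 for all i ≠ j has cardinality at most 12. -/
open RealInnerProductSpace

theorem aux_nonpos_card : ∀ (d : ℕ) (E : Type) [NormedAddCommGroup E]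
    [InnerProductSpace ℝ E] [FiniteDimensional ℝ E], Module.finrank ℝ E = d →
    ∀ S : Finset E, (∀ v ∈ S, v ≠ 0) →
    (∀ u ∈ S, ∀ v ∈ S, u ≠ v → ⟪u, v⟫ ≤ 0) → S.card ≤ 2 * d := by
  intro d
  induction d with
  | zero =>
    intro E _ _ _ hrank S hne _
    have hsub : Subsingleton E := by
      have := Module.finrank_zero_iff (R := ℝ) (M := E) |>.mp hrank
      exact this
    have : S = ∅ := by
      apply Finset.eq_empty_of_forall_notMem
      intro v hv
      exact hne v hv (Subsingleton.elim v 0)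
    simp [this]
  | succ d ih =>
    intro E _ _ _ hrank S hne hpair
    classical
    rcases S.eq_empty_or_nonempty with rfl | ⟨v₀, hv₀⟩
    · simp
    have hv₀ne : v₀ ≠ 0 := hne v₀ hv₀
    set K := (ℝ ∙ v₀)ᗮ with hK
    have hKrank : Module.finrank ℝ K = d := by
      have h1 : Module.finrank ℝ (ℝ ∙ v₀) = 1 := finrank_span_singleton hv₀ne
      have h2 := Submodule.finrank_add_finrank_orthogonal (K := (ℝ ∙ v₀)) (E := E)
      rw [hK]
      omega
    set a : E → ℝ := fun v => ⟪v₀, v⟫ / ‖v₀‖ ^ 2 with ha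
    set w : E → E := fun v => v - a v • v₀ with hw
    have hnorm : ⟪v₀, v₀⟫ = ‖v₀‖ ^ 2 := real_inner_self_eq_norm_sq v₀
    have hn0 : ‖v₀‖ ^ 2 ≠ 0 := pow_ne_zero 2 (norm_ne_zero_iff.mpr hv₀ne)
    have hwortho : ∀ v : E, ⟪v₀, w v⟫ = 0 := by
      intro v
      simp only [hw, ha, inner_sub_right, real_inner_smul_right, hnorm]
      field_simp
      ring
    have hwmem : ∀ v : E, w v ∈ K := by
      intro v
      rw [hK, Submodule.mem_orthogonal_singleton_iff_inner_right]
      exact hwortho v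
    -- decomposition of inner products
    have hinner : ∀ u v : E, ⟪u, v⟫ = a u * a v * ‖v₀‖ ^ 2 + ⟪w u, w v⟫ := by
      intro u v
      have hu : u = a u • v₀ + w u := by simp [hw]
      have hv : v = a v • v₀ + w v := by simp [hw]
      have h1 : ⟪w u, v₀⟫ = 0 := by rw [real_inner_comm]; exact hwortho u
      have h2 : ⟪v₀, w v⟫ = 0 := hwortho v
      conv_lhs => rw [hu, hv]
      simp only [inner_add_left, inner_add_right, real_inner_smul_left, real_inner_smul_right,
        hnorm, h1, h2]
      ring
    -- a v ≤ 0 for v ∈ S, v ≠ v₀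
    have hale : ∀ v ∈ S, v ≠ v₀ → a v ≤ 0 := by
      intro v hv hvne
      have := hpair v₀ hv₀ v hv (fun h => hvne h.symm)
      exact div_nonpos_of_nonpos_of_nonneg this (by positivity)
    set T := S.erase v₀ with hT
    have hTmem : ∀ v ∈ T, v ∈ S ∧ v ≠ v₀ := fun v hv =>
      ⟨Finset.mem_of_mem_erase hv, Finset.ne_of_mem_erase hv⟩
    set T1 := T.filter (fun v => w v = 0) with hT1
    set T2 := T.filter (fun v => w v ≠ 0) with hT2
    have hT1card : T1.card ≤ 1 := by
      rw [Finset.card_le_one]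
      intro u hu v hv
      by_contra huv
      obtain ⟨huT, hwu⟩ := Finset.mem_filter.mp hu
      obtain ⟨hvT, hwv⟩ := Finset.mem_filter.mp hv
      obtain ⟨huS, hune⟩ := hTmem u huT
      obtain ⟨hvS, hvne⟩ := hTmem v hvT
      have hinuv := hpair u huS v hvS huv
      rw [hinner u v, hwu, hwv] at hinuv
      simp only [inner_zero_left] at hinuv
      have hau : a u < 0 := by
        rcases lt_or_eq_of_le (hale u huS hune) with h | h
        · exact h
        · exfalso; apply hne u huS
          have : u = a u • v₀ + w u := by simp [hw]
          rw [this, hwu, h]; simp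
      have hav : a v < 0 := by
        rcases lt_or_eq_of_le (hale v hvS hvne) with h | h
        · exact h
        · exfalso; apply hne v hvS
          have : v = a v • v₀ + w v := by simp [hw]
          rw [this, hwv, h]; simp
      have : 0 < a u * a v * ‖v₀‖ ^ 2 := by
        apply mul_pos (mul_pos_of_neg_of_neg hau hav)
        positivity
      linarith
    -- T2 via image in K
    set g : E → K := fun v => ⟨w v, hwmem v⟩ with hg
    have hginj : ∀ u ∈ T2, ∀ v ∈ T2, g u = g v → u = v := by
      intro u hu v hv hguv
      by_contra huv
      obtain ⟨huT, hwu⟩ := Finset.mem_filter.mp hu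
      obtain ⟨hvT, _⟩ := Finset.mem_filter.mp hv
      obtain ⟨huS, hune⟩ := hTmem u huT
      obtain ⟨hvS, hvne⟩ := hTmem v hvT
      have hweq : w u = w v := congrArg Subtype.val hguv
      have hinuv := hpair u huS v hvS huv
      rw [hinner u v, ← hweq, real_inner_self_eq_norm_sq] at hinuv
      have h1 : 0 ≤ a u * a v * ‖v₀‖ ^ 2 := by
        have hau := hale u huS hune
        have hav := hale v hvS hvne
        have h0 : (0:ℝ) ≤ ‖v₀‖ ^ 2 := by positivity
        have h00 : 0 ≤ a u * a v := by nlinarith [mul_nonneg (neg_nonneg.mpr hau) (neg_nonneg.mpr hav)]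
        exact mul_nonneg h00 h0
      have h2 : 0 < ‖w u‖ ^ 2 := by
        have := norm_pos_iff.mpr hwu
        positivity
      linarith
    have hT2card : T2.card ≤ 2 * d := by
      have himg : (T2.image g).card = T2.card := Finset.card_image_iff.mpr hginj
      rw [← himg]
      apply ih K hKrank
      · intro x hx
        obtain ⟨v, hv, rfl⟩ := Finset.mem_image.mp hx
        obtain ⟨_, hwv⟩ := Finset.mem_filter.mp hv
        intro hx0
        exact hwv (congrArg Subtype.val hx0)
      · intro x hx y hy hxy
        obtain ⟨u, hu, rfl⟩ := Finset.mem_image.mp hx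
        obtain ⟨v, hv, rfl⟩ := Finset.mem_image.mp hy
        have huv : u ≠ v := fun h => hxy (by rw [h])
        obtain ⟨huT, _⟩ := Finset.mem_filter.mp hu
        obtain ⟨hvT, _⟩ := Finset.mem_filter.mp hv
        obtain ⟨huS, hune⟩ := hTmem u huT
        obtain ⟨hvS, hvne⟩ := hTmem v hvT
        have hinuv := hpair u huS v hvS huv
        rw [hinner u v] at hinuv
        have h1 : 0 ≤ a u * a v * ‖v₀‖ ^ 2 := by
          have hau := hale u huS hune
          have hav := hale v hvS hvne
          have h0 : (0:ℝ) ≤ ‖v₀‖ ^ 2 := by positivity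
          have h00 : 0 ≤ a u * a v := by nlinarith [mul_nonneg (neg_nonneg.mpr hau) (neg_nonneg.mpr hav)]
          exact mul_nonneg h00 h0
        have : ⟪g u, g v⟫ = ⟪w u, w v⟫ := rfl
        rw [this]
        linarith
    have hTcard : T.card ≤ 2 * d + 1 := by
      have : T1 ∪ T2 = T := by
        rw [hT1, hT2, ← Finset.filter_or]
        apply Finset.filter_true_of_mem
        intro v _; exact em _
      calc T.card = (T1 ∪ T2).card := by rw [this]
        _ ≤ T1.card + T2.card := Finset.card_union_le _ _
        _ ≤ 2 * d + 1 := by omega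
    have : S.card = T.card + 1 := by
      rw [hT, Finset.card_erase_of_mem hv₀]
      have : 1 ≤ S.card := Finset.card_pos.mpr ⟨v₀, hv₀⟩
      omega
    omega

/-- At most 12 pure product two-qubit states can be pairwise perfectly
distinguished in the minimal (SEP) composition: any family of pairs of unit
Bloch vectors with pairwise `nᵢ·nⱼ + mᵢ·mⱼ ≤ 0` has at most 12 members. -/
theorem sep_pairwise_distinguishable_card_le_twelve
    (S : Finset (EuclideanSpace ℝ (Fin 3) × EuclideanSpace ℝ (Fin 3)))
    (hunit : ∀ p ∈ S, ‖p.1‖ = 1 ∧ ‖p.2‖ = 1)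
    (hdist : ∀ p ∈ S, ∀ q ∈ S, p ≠ q → ⟪p.1, q.1⟫ + ⟪p.2, q.2⟫ ≤ 0) :
    S.card ≤ 12 := by
  classical
  let E := EuclideanSpace ℝ (Fin 3)
  let W := WithLp 2 (E × E)
  let f : E × E → W := ⇑(WithLp.equiv 2 (E × E)).symm
  have hf : f = ⇑(WithLp.equiv 2 (E × E)).symm := rfl
  have hfinj : Function.Injective f := (WithLp.equiv 2 (E × E)).symm.injective
  have hrank : Module.finrank ℝ W = 6 := by
    rw [(WithLp.linearEquiv 2 ℝ (E × E)).finrank_eq]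
    simp only [Module.finrank_prod]
    show Module.finrank ℝ (EuclideanSpace ℝ (Fin 3)) + Module.finrank ℝ (EuclideanSpace ℝ (Fin 3)) = 6
    simp [finrank_euclideanSpace]
  have hcard : (S.image f).card = S.card := Finset.card_image_of_injective S hfinj
  rw [← hcard]
  have := aux_nonpos_card 6 W hrank (S.image f)
    (by
      intro v hv
      obtain ⟨p, hp, rfl⟩ := Finset.mem_image.mp hv
      intro h0
      have h1 : p = 0 := hfinj (h0.trans (map_zero (WithLp.linearEquiv 2 ℝ (E × E)).symm).symm)
      have := (hunit p hp).1
      rw [h1] at this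
      simp at this)
    (by
      intro u hu v hv huv
      obtain ⟨p, hp, rfl⟩ := Finset.mem_image.mp hu
      obtain ⟨q, hq, rfl⟩ := Finset.mem_image.mp hv
      have hpq : p ≠ q := fun h => huv (by rw [h])
      have := hdist p hp q hq hpq
      exact this)
  omega
end

section
/- A maximal family of pairwise nonpositively correlated unit vectors in ℝ^d of size 2d must be of the form {±v_1, …, ±v_d} for an orthonormal basis v_1,…,v_d: if 2d unit vectors in ℝ^d have pairwise nonpositive inner products, then they split into d antipodal pairs that are mutually orthogonal. -/
open RealInnerProductSpace

open Module Finset in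
private lemma key_nonpos_bound (n : ℕ) :
    ∀ (E : Type) [NormedAddCommGroup E] [InnerProductSpace ℝ E] [FiniteDimensional ℝ E],
      Module.finrank ℝ E = n → ∀ s : Finset E,
      (∀ x ∈ s, ‖x‖ = 1) → (∀ x ∈ s, ∀ y ∈ s, x ≠ y → ⟪x, y⟫ ≤ 0) →
      s.card ≤ 2 * n ∧ ∀ v ∈ s, s.card = 2 * n → -v ∈ s := by
  induction n with
  | zero =>
    intro E _ _ _ hrank s hu hip
    have hsub : Subsingleton E := (Module.finrank_zero_iff (R := ℝ) (M := E)).1 hrank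
    have hs : s = ∅ := Finset.eq_empty_of_forall_notMem (fun x hx => by
      have h1 := hu x hx
      rw [Subsingleton.elim x 0, norm_zero] at h1; norm_num at h1)
    subst hs; simp
  | succ n ih =>
    intro E _ _ _ hrank s hu hip
    classical
    -- main bound for erased sets
    have hmain : ∀ v ∈ s, ((s.erase v).erase (-v)).card ≤ 2 * n := by
      intro v hv
      have hv1 : ‖v‖ = 1 := hu v hv
      have hv0 : v ≠ 0 := by intro h; rw [h, norm_zero] at hv1; norm_num at hv1
      haveI : Fact (finrank ℝ E = n + 1) := ⟨hrank⟩
      set W : Submodule ℝ E := (ℝ ∙ v)ᗮ with hW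
      have hWrank : finrank ℝ W = n := Submodule.finrank_orthogonal_span_singleton hv0
      -- projection
      set p : E → E := fun x => x - ⟪x, v⟫ • v with hp
      have hpW : ∀ x, p x ∈ W := by
        intro x
        rw [hW, Submodule.mem_orthogonal_singleton_iff_inner_right]
        simp [hp, inner_sub_right, real_inner_smul_right,
          real_inner_self_eq_norm_sq, hv1, real_inner_comm v x]
      have hpinner : ∀ x y, ⟪p x, p y⟫ = ⟪x, y⟫ - ⟪x, v⟫ * ⟪y, v⟫ := by
        intro x y
        simp only [hp, inner_sub_left, inner_sub_right, real_inner_smul_left,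
          real_inner_smul_right, real_inner_self_eq_norm_sq, hv1,
          real_inner_comm v x, real_inner_comm v y]
        ring
      set t : Finset E := (s.erase v).erase (-v) with ht
      have htmem : ∀ x ∈ t, x ∈ s ∧ x ≠ v ∧ x ≠ -v := by
        intro x hx
        rw [ht] at hx
        exact ⟨Finset.mem_of_mem_erase (Finset.mem_of_mem_erase hx),
          Finset.ne_of_mem_erase (Finset.mem_of_mem_erase hx), Finset.ne_of_mem_erase hx⟩
      have hipv : ∀ x ∈ t, ⟪x, v⟫ ≤ 0 := by
        intro x hx
        obtain ⟨hxs, hxv, _⟩ := htmem x hx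
        exact hip x hxs v hv hxv
      have hpne : ∀ x ∈ t, p x ≠ 0 := by
        intro x hx h
        obtain ⟨hxs, hxv, hxnv⟩ := htmem x hx
        have hx1 : ‖x‖ = 1 := hu x hxs
        have hxe : x = ⟪x, v⟫ • v := by rwa [hp, sub_eq_zero] at h
        have : |⟪x, v⟫| = 1 := by
          have := congrArg norm hxe
          rwa [hx1, norm_smul, hv1, mul_one, Real.norm_eq_abs, eq_comm] at this
        have hle := hipv x hx
        have : ⟪x, v⟫ = -1 := by cases abs_cases (⟪x, v⟫ : ℝ) with
          | inl h' => linarith [h'.1, this]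
          | inr h' => linarith [h'.1, this]
        apply hxnv
        rw [hxe, this, neg_one_smul]
      have hppt : ∀ x ∈ t, ∀ y ∈ t, x ≠ y → ⟪p x, p y⟫ ≤ 0 := by
        intro x hx y hy hxy
        rw [hpinner]
        have h1 := hip x (htmem x hx).1 y (htmem y hy).1 hxy
        have h2 := mul_nonneg (neg_nonneg.2 (hipv x hx)) (neg_nonneg.2 (hipv y hy))
        nlinarith
      -- normalized projections in W
      set g : E → W := fun x => ⟨‖p x‖⁻¹ • p x, Submodule.smul_mem _ _ (hpW x)⟩ with hg
      have hgn : ∀ x ∈ t, ‖(g x : E)‖ = 1 := by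
        intro x hx
        rw [hg]
        simp only [norm_smul, norm_inv, norm_norm]
        rw [inv_mul_cancel₀ (norm_ne_zero_iff.2 (hpne x hx))]
      have hinj : Set.InjOn g t := by
        intro x hx y hy hxy
        by_contra hne
        have hpos : (0:ℝ) < ⟪p x, p y⟫ := by
          have hx0 := hpne x hx
          have hy0 := hpne y hy
          have hxe : p x = ‖p x‖ • (g x : E) := by
            rw [hg]; simp [smul_smul, mul_inv_cancel₀ (norm_ne_zero_iff.2 hx0)]
          have hye : p y = ‖p y‖ • (g y : E) := by
            rw [hg]; simp [smul_smul, mul_inv_cancel₀ (norm_ne_zero_iff.2 hy0)]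
          rw [hxe, hye, hxy, real_inner_smul_left, real_inner_smul_right,
            real_inner_self_eq_norm_sq, hgn y hy]
          have := norm_pos_iff.2 hx0
          have := norm_pos_iff.2 hy0
          nlinarith
        exact absurd (hppt x hx y hy hne) (not_le.2 hpos)
      have hcard : (t.image g).card = t.card := Finset.card_image_of_injOn hinj
      have hb := (ih W hWrank (t.image g)
        (by
          intro a ha
          obtain ⟨x, hx, rfl⟩ := Finset.mem_image.1 ha
          rw [← hgn x hx]; rfl)
        (by
          intro a ha b hb hab
          obtain ⟨x, hx, rfl⟩ := Finset.mem_image.1 ha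
          obtain ⟨y, hy, rfl⟩ := Finset.mem_image.1 hb
          have hxy : x ≠ y := fun h => hab (by rw [h])
          have : ⟪(g x : E), (g y : E)⟫ ≤ 0 := by
            rw [hg]
            simp only [real_inner_smul_left, real_inner_smul_right]
            have h1 := hppt x hx y hy hxy
            have h2 : (0:ℝ) ≤ ‖p x‖⁻¹ := by positivity
            have h3 : (0:ℝ) ≤ ‖p y‖⁻¹ := by positivity
            nlinarith [mul_nonneg (mul_nonneg h3 h2) (neg_nonneg.2 h1)]
          rwa [Submodule.coe_inner] )).1
      rw [hcard] at hb
      omega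
    constructor
    · rcases Finset.eq_empty_or_nonempty s with rfl | ⟨v, hv⟩
      · simp
      · have h1 := hmain v hv
        have h2 : s.card ≤ ((s.erase v).erase (-v)).card + 2 := by
          have := Finset.pred_card_le_card_erase (a := -v) (s := s.erase v)
          have := Finset.pred_card_le_card_erase (a := v) (s := s)
          omega
        omega
    · intro v hv hcard
      by_contra hnv
      have h1 := hmain v hv
      have herase : (s.erase v).erase (-v) = s.erase v := by
        apply Finset.erase_eq_of_notMem
        intro h
        exact hnv (Finset.mem_of_mem_erase h)
      rw [herase, Finset.card_erase_of_mem hv, hcard] at h1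
      omega

/-- A maximal family of `2d` unit vectors in ℝ^d with pairwise nonpositive
inner products splits into `d` antipodal pairs that are mutually orthogonal. -/
theorem maximal_nonpos_family_antipodal_orthogonal
    (d : ℕ) (v : Fin (2 * d) → EuclideanSpace ℝ (Fin d))
    (hinj : Function.Injective v)
    (hunit : ∀ i, ‖v i‖ = 1)
    (hip : ∀ i j, i ≠ j → ⟪v i, v j⟫ ≤ 0) :
    ∃ f : Fin (2 * d) → Fin (2 * d),
      Function.Involutive f ∧ (∀ i, f i ≠ i) ∧ (∀ i, v (f i) = -v i) ∧
      (∀ i j, j ≠ i → j ≠ f i → ⟪v i, v j⟫ = 0) := by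
  classical
  have hrank : Module.finrank ℝ (EuclideanSpace ℝ (Fin d)) = d := finrank_euclideanSpace_fin
  set s : Finset (EuclideanSpace ℝ (Fin d)) := Finset.image v Finset.univ with hs
  have hcard : s.card = 2 * d := by
    rw [hs, Finset.card_image_of_injective _ hinj, Finset.card_univ, Fintype.card_fin]
  have hmem : ∀ i, v i ∈ s := fun i => Finset.mem_image_of_mem v (Finset.mem_univ i)
  have hkey := key_nonpos_bound d (EuclideanSpace ℝ (Fin d)) hrank s
    (by rintro x hx; obtain ⟨i, _, rfl⟩ := Finset.mem_image.1 hx; exact hunit i)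
    (by
      rintro x hx y hy hxy
      obtain ⟨i, _, rfl⟩ := Finset.mem_image.1 hx
      obtain ⟨j, _, rfl⟩ := Finset.mem_image.1 hy
      exact hip i j (fun h => hxy (by rw [h])))
  have hanti : ∀ i, ∃ j, v j = -v i := by
    intro i
    have := hkey.2 (v i) (hmem i) hcard
    obtain ⟨j, _, hj⟩ := Finset.mem_image.1 this
    exact ⟨j, hj⟩
  choose f hf using hanti
  have hne : ∀ i, f i ≠ i := by
    intro i h
    have := hf i
    rw [h] at this
    have : (2:ℝ) • v i = 0 := by rw [two_smul]; rw [eq_neg_iff_add_eq_zero] at this; exact_mod_cast this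
    have hvz : v i = 0 := by
      have h2 : (2:ℝ) ≠ 0 := by norm_num
      exact (smul_eq_zero.1 this).resolve_left h2
    have := hunit i
    rw [hvz, norm_zero] at this
    norm_num at this
  refine ⟨f, ?_, hne, hf, ?_⟩
  · intro i
    apply hinj
    rw [hf (f i), hf i, neg_neg]
  · intro i j hji hjfi
    have h1 : ⟪v i, v j⟫ ≤ 0 := hip i j (Ne.symm hji)
    have h2 : ⟪v (f i), v j⟫ ≤ 0 := hip (f i) j (Ne.symm hjfi)
    rw [hf i, inner_neg_left] at h2
    linarith
end
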